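/- Let α > 0, let t(x) = α‖x‖² for x ∈ ℝⁿ (with the Euclidean norm), let T = {(x, α‖x‖²) : x ∈ ℝⁿ} ⊆ ℝⁿ × ℝ (with the Euclidean product distance), and let (x̄, ȳ) ∈ ℝⁿ × ℝ with x̄ ≠ 0 and ȳ ≠ α‖x̄‖². Set Δ := (1 − 2αȳ)³/(216α⁶) + ‖x̄‖²/(16α⁴). If Δ < 0, then the set of points of T nearest to (x̄, ȳ) is the singleton {(w₂·x̄/‖x̄‖, α·w₂²)}, where w₂ := 2·√((2αȳ − 1)/(6α²))·cos(ϑ/3) and ϑ := arccos((3√6/2)·α‖x̄‖/(2αȳ − 1)^{3/2}). -/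

import Mathlib

private lemma stmt_19_aux (α yb r P w₂ : ℝ) (hα2 : 0 < α ^ 2) (hP : 0 < P)
    (hPdef : P = 2 * α * yb - 1) (hcub : 2 * α ^ 2 * w₂ ^ 3 = P * w₂ + r)
    (hw2pos : 0 < w₂) (hw2sq : P < 2 * α ^ 2 * w₂ ^ 2) :
    ∀ u : ℝ, 0 ≤ u →
      (r - w₂) ^ 2 + (yb - α * w₂ ^ 2) ^ 2 + (u - w₂) ^ 2 * (P / 2) ≤
      (r - u) ^ 2 + (yb - α * u ^ 2) ^ 2 := by
  intro u hu
  have hid : (r - u) ^ 2 + (yb - α * u ^ 2) ^ 2 -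
      ((r - w₂) ^ 2 + (yb - α * w₂ ^ 2) ^ 2) =
      (u - w₂) ^ 2 * (α ^ 2 * (u ^ 2 + 2 * u * w₂ + 3 * w₂ ^ 2) - P) := by
    linear_combination (u ^ 2 - w₂ ^ 2) * hPdef + (2 * (u - w₂)) * hcub
  have hbr : P / 2 ≤ α ^ 2 * (u ^ 2 + 2 * u * w₂ + 3 * w₂ ^ 2) - P := by
    nlinarith [sq_nonneg u, mul_nonneg (mul_nonneg hα2.le hu) hw2pos.le, hw2sq]
  nlinarith [sq_nonneg (u - w₂), hbr, hid,
    mul_le_mul_of_nonneg_left hbr (sq_nonneg (u - w₂))]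

set_option maxHeartbeats 1000000 in
/-- projection of `(x̄, ȳ)` (with `x̄ ≠ 0`, `ȳ ≠ α‖x̄‖²`) onto the
graph of `t(x) = α‖x‖²` when `Δ < 0`: the singleton `{(w₂·x̄/‖x̄‖, αw₂²)}`. -/
theorem stmt_19 (n : ℕ) (α : ℝ) (hα : 0 < α)
    (xb : EuclideanSpace ℝ (Fin n)) (yb : ℝ) (hx : xb ≠ 0)
    (hy : yb ≠ α * ‖xb‖ ^ 2) (Δ ϑ w₂ : ℝ)
    (hΔ : Δ = (1 - 2 * α * yb) ^ 3 / (216 * α ^ 6) + ‖xb‖ ^ 2 / (16 * α ^ 4))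
    (hϑ : ϑ = Real.arccos ((3 * Real.sqrt 6 / 2) * α * ‖xb‖ /
        (2 * α * yb - 1) ^ ((3 : ℝ) / 2)))
    (hw₂ : w₂ = 2 * Real.sqrt ((2 * α * yb - 1) / (6 * α ^ 2)) * Real.cos (ϑ / 3))
    (hcase : Δ < 0) :
    {z : EuclideanSpace ℝ (Fin n) × ℝ |
        (∃ x : EuclideanSpace ℝ (Fin n), z = (x, α * ‖x‖ ^ 2)) ∧
        ∀ w : EuclideanSpace ℝ (Fin n),
          Real.sqrt (‖xb - z.1‖ ^ 2 + (yb - z.2) ^ 2) ≤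
            Real.sqrt (‖xb - w‖ ^ 2 + (yb - α * ‖w‖ ^ 2) ^ 2)} =
      {((w₂ / ‖xb‖) • xb, α * w₂ ^ 2)} := by
  have hα2 : (0:ℝ) < α ^ 2 := by positivity
  set r := ‖xb‖ with hrdef
  clear_value r
  have hr : 0 < r := hrdef ▸ norm_pos_iff.mpr hx
  set P : ℝ := 2 * α * yb - 1 with hPdef
  clear_value P
  -- Step 1: translate Δ < 0 into a polynomial inequality
  have hkey : 27 * α ^ 2 * r ^ 2 < 2 * P ^ 3 := by
    rw [hΔ] at hcase
    have h432 : (0:ℝ) < 432 * α ^ 6 := by positivity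
    have hmul := mul_neg_of_pos_of_neg h432 hcase
    have hsimp : 432 * α ^ 6 * ((1 - 2 * α * yb) ^ 3 / (216 * α ^ 6)
        + r ^ 2 / (16 * α ^ 4)) = 2 * (1 - 2 * α * yb) ^ 3 + 27 * α ^ 2 * r ^ 2 := by
      field_simp
      ring
    rw [hsimp] at hmul
    have : (1 - 2 * α * yb) ^ 3 = -P ^ 3 := by rw [hPdef]; ring
    rw [this] at hmul
    linarith
  have hP : 0 < P := by
    by_contra h
    push_neg at h
    nlinarith [mul_pos (mul_pos hα2 hr) hr, sq_nonneg P]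
  have hsqP : 0 < Real.sqrt P := Real.sqrt_pos.mpr hP
  have hsq6 : 0 < Real.sqrt 6 := Real.sqrt_pos.mpr (by norm_num)
  have h6s : Real.sqrt 6 * Real.sqrt 6 = 6 := Real.mul_self_sqrt (by norm_num)
  have hPs : Real.sqrt P * Real.sqrt P = P := Real.mul_self_sqrt hP.le
  have hrpow : P ^ ((3:ℝ)/2) = P * Real.sqrt P := by
    rw [show (3:ℝ)/2 = 1 + 1/2 by norm_num, Real.rpow_add hP, Real.rpow_one,
      Real.sqrt_eq_rpow]
  set A : ℝ := (3 * Real.sqrt 6 / 2) * α * r / P ^ ((3 : ℝ) / 2) with hAdef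
  clear_value A
  have hA_pos : 0 < A := by
    rw [hAdef, hrpow]
    positivity
  have hA_lt : A < 1 := by
    rw [hAdef, hrpow, div_lt_one (by positivity)]
    have e1 : ((3 * Real.sqrt 6 / 2) * α * r) ^ 2 = 27/2 * (α ^ 2 * r ^ 2) := by
      linear_combination (9/4 * α ^ 2 * r ^ 2) * h6s
    have e2 : (P * Real.sqrt P) ^ 2 = P ^ 3 := by
      linear_combination (P ^ 2) * hPs
    have hsq : ((3 * Real.sqrt 6 / 2) * α * r) ^ 2 < (P * Real.sqrt P) ^ 2 := by
      rw [e1, e2]; nlinarith [hkey]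
    exact lt_of_pow_lt_pow_left₀ 2 (by positivity) hsq
  have hcosϑ : Real.cos ϑ = A := by
    rw [hϑ]
    exact Real.cos_arccos (by linarith) hA_lt.le
  set c := Real.cos (ϑ / 3) with hcdef
  clear_value c
  have htriple : 4 * c ^ 3 - 3 * c = A := by
    have h := Real.cos_three_mul (ϑ / 3)
    rw [show 3 * (ϑ / 3) = ϑ by ring, hcosϑ, ← hcdef] at h
    linarith
  have hϑ_lt : ϑ < Real.pi / 2 := by
    rw [hϑ]; exact Real.arccos_lt_pi_div_two.mpr hA_pos
  have hϑ_nonneg : 0 ≤ ϑ := by rw [hϑ]; exact Real.arccos_nonneg _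
  have hc_gt : Real.sqrt 3 / 2 < c := by
    have h1 : ϑ / 3 < Real.pi / 6 := by linarith
    have h2 := Real.cos_lt_cos_of_nonneg_of_le_pi (by linarith : (0:ℝ) ≤ ϑ / 3)
      (by linarith [Real.pi_pos] : Real.pi / 6 ≤ Real.pi) h1
    rw [hcdef]
    rwa [Real.cos_pi_div_six] at h2
  have hc_pos : 0 < c := lt_trans (by positivity) hc_gt
  have hc2 : 3/4 < c ^ 2 := by
    nlinarith [Real.sq_sqrt (show (0:ℝ) ≤ 3 by norm_num), Real.sqrt_nonneg 3]
  set s := Real.sqrt (P / (6 * α ^ 2)) with hsdef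
  clear_value s
  have hs_pos : 0 < s := by
    rw [hsdef]; exact Real.sqrt_pos.mpr (by positivity)
  have hs2 : 6 * α ^ 2 * s ^ 2 = P := by
    rw [hsdef, Real.sq_sqrt (by positivity : (0:ℝ) ≤ P / (6 * α ^ 2))]
    field_simp
  have h6α : Real.sqrt (6 * α ^ 2) = Real.sqrt 6 * α := by
    rw [Real.sqrt_mul (by norm_num : (0:ℝ) ≤ 6), Real.sqrt_sq hα.le]
  have hsval : s = Real.sqrt P / (Real.sqrt 6 * α) := by
    rw [hsdef, Real.sqrt_div hP.le, h6α]
  have hqP : Real.sqrt P = s * (Real.sqrt 6 * α) := by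
    rw [hsval]; field_simp
  have hA' : A * (P * Real.sqrt P) = (3 * Real.sqrt 6 / 2) * α * r := by
    rw [hAdef, hrpow]
    field_simp
  have hr4 : 4 * α ^ 2 * s ^ 3 * A = r := by
    have hne : (3 * Real.sqrt 6 * α / 2) ≠ 0 := by positivity
    apply mul_left_cancel₀ hne
    linear_combination hA' + (A * Real.sqrt P) * hs2 - (6 * α ^ 2 * s ^ 2 * A) * hqP
  have hw₂' : w₂ = 2 * s * c := by rw [hw₂]
  have hcub : 2 * α ^ 2 * w₂ ^ 3 = P * w₂ + r := by
    rw [hw₂']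
    linear_combination (4 * α ^ 2 * s ^ 3) * htriple + hr4 + (2 * s * c) * hs2
  have hw2pos : 0 < w₂ := by rw [hw₂']; positivity
  have hw2sq : P < 2 * α ^ 2 * w₂ ^ 2 := by
    rw [hw₂']
    have e3 : 2 * α ^ 2 * (2 * s * c) ^ 2 = 4/3 * P * c ^ 2 := by
      linear_combination (4/3 * c ^ 2) * hs2
    have e4 := mul_pos hP (show (0:ℝ) < c ^ 2 - 3/4 by linarith)
    linarith
  have hkey2 := stmt_19_aux α yb r P w₂ hα2 hP hPdef hcub hw2pos hw2sq
  -- geometry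
  have hnp : ‖(w₂ / r) • xb‖ = w₂ := by
    rw [norm_smul, Real.norm_eq_abs, abs_of_pos (div_pos hw2pos hr), ← hrdef]
    field_simp
  have hd2 : ‖xb - (w₂ / r) • xb‖ ^ 2 = (r - w₂) ^ 2 := by
    have h1 : xb - (w₂ / r) • xb = (1 - w₂ / r) • xb := by
      rw [sub_smul, one_smul]
    rw [h1, norm_smul, Real.norm_eq_abs, ← hrdef, mul_pow, sq_abs]
    field_simp
  have hlow : ∀ w : EuclideanSpace ℝ (Fin n), (r - ‖w‖) ^ 2 ≤ ‖xb - w‖ ^ 2 := by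
    intro w
    have h := abs_norm_sub_norm_le xb w
    calc (r - ‖w‖) ^ 2 = |r - ‖w‖| ^ 2 := (sq_abs _).symm
      _ ≤ ‖xb - w‖ ^ 2 := by
          apply pow_le_pow_left₀ (abs_nonneg _)
          rw [hrdef]; exact h
  ext z
  simp only [Set.mem_setOf_eq, Set.mem_singleton_iff]
  constructor
  · rintro ⟨⟨x, rfl⟩, hmin'⟩
    simp only at hmin'
    have h1 := hmin' ((w₂ / r) • xb)
    rw [hd2, hnp] at h1
    have h2 : ‖xb - x‖ ^ 2 + (yb - α * ‖x‖ ^ 2) ^ 2 ≤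
        (r - w₂) ^ 2 + (yb - α * w₂ ^ 2) ^ 2 :=
      (Real.sqrt_le_sqrt_iff (by positivity)).mp h1
    have h3 : (r - ‖x‖) ^ 2 + (yb - α * ‖x‖ ^ 2) ^ 2 ≤
        (r - w₂) ^ 2 + (yb - α * w₂ ^ 2) ^ 2 := le_trans (by linarith [hlow x]) h2
    have hxnorm : ‖x‖ = w₂ := by
      by_contra hne
      have hpos : 0 < (‖x‖ - w₂) ^ 2 :=
        lt_of_le_of_ne (sq_nonneg _) (Ne.symm (pow_ne_zero 2 (sub_ne_zero.mpr hne)))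
      have hk := hkey2 ‖x‖ (norm_nonneg x)
      have hX := mul_pos hpos (half_pos hP)
      linarith
    rw [hxnorm] at h2
    have h5 := hlow x
    rw [hxnorm] at h5
    have h6 : ‖xb - x‖ ^ 2 = (r - w₂) ^ 2 := le_antisymm (by linarith) h5
    have hexp := norm_sub_sq_real xb x
    rw [hxnorm, ← hrdef] at hexp
    have hinner : (inner ℝ xb x : ℝ) = r * w₂ := by
      linear_combination (hexp - h6) / 2
    have hcs : (inner ℝ xb x : ℝ) = ‖xb‖ * ‖x‖ := by
      rw [hxnorm, ← hrdef, hinner]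
    have heq := inner_eq_norm_mul_iff_real.mp hcs
    rw [hxnorm, ← hrdef] at heq
    have h7 : x = (w₂ / r) • xb := by
      have h8 := congrArg (fun v : EuclideanSpace ℝ (Fin n) => (r⁻¹ : ℝ) • v) heq
      simp only [smul_smul] at h8
      rw [inv_mul_cancel₀ hr.ne', one_smul] at h8
      rw [show w₂ / r = r⁻¹ * w₂ by ring, ← h8]
    rw [hxnorm, h7]
  · rintro rfl
    refine ⟨⟨(w₂ / r) • xb, ?_⟩, ?_⟩
    · rw [hnp]
    · intro w
      simp only
      apply Real.sqrt_le_sqrt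
      rw [hd2]
      have hk := hkey2 ‖w‖ (norm_nonneg w)
      have hl := hlow w
      have hX : 0 ≤ (‖w‖ - w₂) ^ 2 * (P / 2) :=
        mul_nonneg (sq_nonneg _) (by linarith)
      linarith
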